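/- arXiv:1807.02156 — 2 statements merged into one kernel-verified Lean document; each statement's English description precedes it below -/
import Mathlib

section
/- Let n ≥ 1. Then for every nonzero rational number q (equivalently, as an identity of rational functions in an indeterminate q), Σ_{A ∈ Π_n} q^{t(A)}·(1 − q^{−1})^{a(A)} = q^{n(n−1)/2}, where a(A) denotes the number of arcs of A. -/
open Finset
open scoped Classical

noncomputable section

/-- The arcs of a set partition `A` of `{1,…,n}`: pairs `(i,j)` with `i < j`, `i` and `j` in
the same block, and no element of that block strictly between `i` and `j`. -/
noncomputable def arcs (n : ℕ) (A : Finpartition (Finset.Icc 1 n)) : Finset (ℕ × ℕ) :=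
  (Finset.Icc 1 n ×ˢ Finset.Icc 1 n).filter
    (fun p => p.1 < p.2 ∧ ∃ B ∈ A.parts, p.1 ∈ B ∧ p.2 ∈ B ∧
      ∀ k ∈ B, ¬ (p.1 < k ∧ k < p.2))

/-- The depth of a vertex `v`: the number of arcs `(i,j)` with `i < v < j`. -/
noncomputable def vertexDepth (n : ℕ) (A : Finpartition (Finset.Icc 1 n)) (v : ℕ) : ℕ :=
  ((arcs n A).filter (fun p => p.1 < v ∧ v < p.2)).card

/-- The depth of an arc `α = (u,v)`: the number of arcs `(i,j)` with `i < u < v < j`. -/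
noncomputable def arcDepth (n : ℕ) (A : Finpartition (Finset.Icc 1 n)) (α : ℕ × ℕ) : ℕ :=
  ((arcs n A).filter (fun p => p.1 < α.1 ∧ α.2 < p.2)).card

/-- The depth index `t(A) = Σ_{i=1}^m (n−i) − Σ_{v=1}^n depth(v) + Σ_{α} depth(α)`,
where `m` is the number of arcs of `A`. -/
noncomputable def depthIndex (n : ℕ) (A : Finpartition (Finset.Icc 1 n)) : ℤ :=
  (∑ i ∈ Finset.Icc 1 (arcs n A).card, ((n : ℤ) - (i : ℤ)))
    - ∑ v ∈ Finset.Icc 1 n, (vertexDepth n A v : ℤ)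
    + ∑ α ∈ arcs n A, (arcDepth n A α : ℤ)

/-- The intertwining number of `A`: the sum over all unordered pairs of distinct blocks
`{B, C}` of the number of pairs `(b,c) ∈ B × C` with no element of `B ∪ C` strictly between
them.  Since distinct blocks are disjoint, this equals the number of pairs `(x,y)` with
`x < y` lying in different blocks `B ∋ x`, `C ∋ y` such that no element of `B ∪ C` lies
strictly between `x` and `y`. -/
noncomputable def inumber (n : ℕ) (A : Finpartition (Finset.Icc 1 n)) : ℕ :=
  ((Finset.Icc 1 n ×ˢ Finset.Icc 1 n).filter
    (fun p => p.1 < p.2 ∧ ∃ B ∈ A.parts, ∃ C ∈ A.parts, B ≠ C ∧ p.1 ∈ B ∧ p.2 ∈ C ∧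
      ∀ k ∈ B ∪ C, ¬ (p.1 < k ∧ k < p.2))).card

/-- `u` and `v` lie in the same block of `A`. -/
def sameBlock (n : ℕ) (A : Finpartition (Finset.Icc 1 n)) (u v : ℕ) : Prop :=
  ∃ B ∈ A.parts, u ∈ B ∧ v ∈ B

/-- The partner of `v`: `0` if `v` is the minimum of its block, and otherwise the largest
element of the block of `v` smaller than `v`. -/
noncomputable def partner (n : ℕ) (A : Finpartition (Finset.Icc 1 n)) (v : ℕ) : ℕ :=
  ((Finset.Icc 1 n).filter (fun u => u < v ∧ sameBlock n A u v)).sup id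

/-- The partial depth index `t_v(A) = u + #{arcs (i,j) : u < i < j < v}`, where `u` is the
partner of `v`. -/
noncomputable def partialDepthIndex (n : ℕ) (A : Finpartition (Finset.Icc 1 n)) (v : ℕ) : ℕ :=
  partner n A v +
    ((arcs n A).filter (fun p => partner n A v < p.1 ∧ p.2 < v)).card

/-- The partial intertwining number `i_v(A)`: the number of `i` with `u < i < v` (where `u`
is the partner of `v`) such that `i` has no successor in its block, or the successor of `i`
in its block is greater than `v`; i.e. every element of the block of `i` larger than `i`
is larger than `v`. -/
noncomputable def partialInumber (n : ℕ) (A : Finpartition (Finset.Icc 1 n)) (v : ℕ) : ℕ :=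
  ((Finset.Icc 1 n).filter
    (fun i => partner n A v < i ∧ i < v ∧
      ∀ j, sameBlock n A i j → i < j → v < j)).card

/-- The adjacency matrix of `A`: the `n × n` rational matrix whose `(i,j)` entry is `1` if
`(i+1, j+1)` is an arc of `A` (indices shifted from `Fin n` to `{1,…,n}`) and `0` otherwise. -/
noncomputable def adjMatrix (n : ℕ) (A : Finpartition (Finset.Icc 1 n)) :
    Matrix (Fin n) (Fin n) ℚ :=
  fun i j => if ((i : ℕ) + 1, (j : ℕ) + 1) ∈ arcs n A then 1 else 0

/-- The rank-control matrix entry `r_{i,j}` of an `n × n` matrix `M`: the rank of the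
submatrix of `M` consisting of rows `{i, i+1, …, n}` and columns `{1, …, j}`
(in 1-based indexing). -/
noncomputable def rankControl (n : ℕ) (M : Matrix (Fin n) (Fin n) ℚ) (i j : ℕ) : ℕ :=
  (M.submatrix (fun k : {k : Fin n // i ≤ (k : ℕ) + 1} => (k : Fin n))
               (fun l : {l : Fin n // (l : ℕ) + 1 ≤ j} => (l : Fin n))).rank

end
section Aux
open Finpartition

variable {n : ℕ}

lemma ground_succ (n : ℕ) : Finset.Icc 1 (n+1) = insert (n+1) (Finset.Icc 1 n) := by
  ext x; simp [Nat.lt_succ_iff, Nat.succ_le_iff] <;> omega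

lemma succ_not_mem_ground (n : ℕ) : (n+1) ∉ Finset.Icc 1 n := by simp

lemma part_subset_ground {A : Finpartition (Finset.Icc 1 n)} {B : Finset ℕ}
    (hB : B ∈ A.parts) : B ⊆ Finset.Icc 1 n := A.le hB

/-- Extension of a partition of `{1,…,n}` by the singleton `{n+1}`. -/
noncomputable def extNone (A : Finpartition (Finset.Icc 1 n)) :
    Finpartition (Finset.Icc 1 (n+1)) :=
  A.extend (b := {n+1}) (by simp [Finset.bot_eq_empty])
    (by simp) (by ext x; simp [Nat.lt_succ_iff, Nat.succ_le_iff]; omega)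

lemma extNone_parts (A : Finpartition (Finset.Icc 1 n)) :
    (extNone A).parts = insert {n+1} A.parts := rfl

/-- Extension of a partition of `{1,…,n}` by adding `n+1` to the block `B`. -/
noncomputable def extSome (A : Finpartition (Finset.Icc 1 n)) (B : Finset ℕ)
    (hB : B ∈ A.parts) : Finpartition (Finset.Icc 1 (n+1)) where
  parts := insert (insert (n+1) B) (A.parts.erase B)
  supIndep := by
    rw [Finset.supIndep_iff_pairwiseDisjoint]
    have hpd : (↑(A.parts.erase B) : Set (Finset ℕ)).PairwiseDisjoint id :=
      A.disjoint.subset (by simp [Finset.coe_subset, Finset.erase_subset])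
    rw [Finset.coe_insert]
    refine hpd.insert ?_
    intro C hC _
    have hCp : C ∈ A.parts := Finset.mem_of_mem_erase hC
    have hCB : C ≠ B := Finset.ne_of_mem_erase hC
    have h1 : Disjoint B C := A.disjoint hB hCp (Ne.symm hCB)
    simp only [id]
    rw [Finset.disjoint_left]
    intro x hx
    rcases Finset.mem_insert.1 hx with rfl | hxB
    · exact fun hxc => succ_not_mem_ground n (part_subset_ground hCp hxc)
    · exact fun hxc => (Finset.disjoint_left.1 h1) hxB hxc
  sup_parts := by
    rw [Finset.sup_insert, id]
    have h1 : (A.parts.erase B).sup id ⊔ B = Finset.Icc 1 n := by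
      rw [sup_comm]
      have := Finset.sup_insert (b := B) (s := A.parts.erase B) (f := id)
      rw [Finset.insert_erase hB] at this
      rw [show (id B : Finset ℕ) = B from rfl] at this
      rw [← this]
      exact A.sup_parts
    have h2 : insert (n+1) B ⊔ (A.parts.erase B).sup id
        = insert (n+1) (B ⊔ (A.parts.erase B).sup id) := by
      simp [sup_eq_union, Finset.insert_union]
    rw [h2, sup_comm, h1, ← ground_succ]
  bot_notMem := by
    simp only [Finset.bot_eq_empty, Finset.mem_insert]
    rintro (h | h)
    · exact (Finset.insert_ne_empty _ _) h.symm
    · exact A.bot_notMem (Finset.mem_of_mem_erase h)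

lemma extSome_parts (A : Finpartition (Finset.Icc 1 n)) (B : Finset ℕ) (hB : B ∈ A.parts) :
    (extSome A B hB).parts = insert (insert (n+1) B) (A.parts.erase B) := rfl

lemma ground_sdiff (n : ℕ) : Finset.Icc 1 (n+1) \ {n+1} = Finset.Icc 1 n := by
  ext x; simp; omega

/-- Restriction of a partition of `{1,…,n+1}` to `{1,…,n}`. -/
noncomputable def res (A : Finpartition (Finset.Icc 1 (n+1))) :
    Finpartition (Finset.Icc 1 n) :=
  (A.avoid {n+1}).copy (ground_sdiff n)

lemma res_parts (A : Finpartition (Finset.Icc 1 (n+1))) :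
    (res A).parts = (A.parts.image (· \ {n+1})).erase ∅ := rfl

end Aux

section Aux2
open Finpartition

lemma Finset.sdiff_singleton_eq_self {s : Finset ℕ} {a : ℕ} (h : a ∉ s) : s \ {a} = s := by
  rw [Finset.sdiff_singleton_eq_erase, Finset.erase_eq_self.2 h]

variable {n : ℕ}

lemma insert_succ_sdiff {n : ℕ} {B : Finset ℕ} (h : (n+1) ∉ B) :
    insert (n+1) B \ {n+1} = B := by
  ext x; simp only [Finset.mem_sdiff, Finset.mem_insert, Finset.mem_singleton]
  constructor
  · rintro ⟨rfl | hx, hne⟩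
    · exact absurd rfl hne
    · exact hx
  · intro hx; exact ⟨Or.inr hx, fun hh => h (hh ▸ hx)⟩

lemma not_succ_mem_part {A : Finpartition (Finset.Icc 1 n)} {B : Finset ℕ}
    (hB : B ∈ A.parts) : (n+1) ∉ B :=
  fun h => succ_not_mem_ground n (part_subset_ground hB h)

lemma res_extNone (A : Finpartition (Finset.Icc 1 n)) : res (extNone A) = A := by
  apply Finpartition.ext
  rw [res_parts, extNone_parts]
  ext C
  simp only [Finset.mem_erase, Finset.mem_image, Finset.mem_insert]
  constructor
  · rintro ⟨hne, D, (rfl | hD), rfl⟩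
    · simp at hne
    · rwa [Finset.sdiff_singleton_eq_self (not_succ_mem_part hD)]
  · intro hC
    exact ⟨(A.nonempty_of_mem_parts hC).ne_empty, C, Or.inr hC,
      Finset.sdiff_singleton_eq_self (not_succ_mem_part hC)⟩

lemma res_extSome (A : Finpartition (Finset.Icc 1 n)) (B : Finset ℕ) (hB : B ∈ A.parts) :
    res (extSome A B hB) = A := by
  apply Finpartition.ext
  rw [res_parts, extSome_parts]
  ext C
  simp only [Finset.mem_erase, Finset.mem_image, Finset.mem_insert]
  constructor
  · rintro ⟨hne, D, (rfl | hD), rfl⟩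
    · rwa [insert_succ_sdiff (not_succ_mem_part hB)]
    · have hD' := hD.2
      rwa [Finset.sdiff_singleton_eq_self (not_succ_mem_part hD')]
  · intro hC
    by_cases hCB : C = B
    · subst hCB
      refine ⟨(A.nonempty_of_mem_parts hC).ne_empty, insert (n+1) C, Or.inl rfl, ?_⟩
      rw [insert_succ_sdiff (not_succ_mem_part hC)]
    · exact ⟨(A.nonempty_of_mem_parts hC).ne_empty, C, Or.inr ⟨hCB, hC⟩,
        Finset.sdiff_singleton_eq_self (not_succ_mem_part hC)⟩

lemma succ_mem_ground_succ (n : ℕ) : (n+1) ∈ Finset.Icc 1 (n+1) := by simp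

lemma ext_res (A : Finpartition (Finset.Icc 1 (n+1))) :
    A = extNone (res A) ∨ ∃ (B : Finset ℕ) (hB : B ∈ (res A).parts), A = extSome (res A) B hB := by
  set P := A.part (n+1) with hPdef
  have hP : P ∈ A.parts := A.part_mem.2 (succ_mem_ground_succ n)
  have hnP : (n+1) ∈ P := A.mem_part (succ_mem_ground_succ n)
  have key : ∀ D ∈ A.parts, (n+1) ∈ D → D = P := fun D hD hnD =>
    A.eq_of_mem_parts hD hP hnD hnP
  by_cases h : P = {n+1}
  · left
    apply Finpartition.ext
    rw [extNone_parts, res_parts]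
    ext C
    simp only [Finset.mem_insert, Finset.mem_erase, Finset.mem_image]
    constructor
    · intro hC
      by_cases hCn : C = {n+1}
      · exact Or.inl hCn
      · have hnC : (n+1) ∉ C := fun hx => hCn (by rw [key C hC hx, h])
        exact Or.inr ⟨(A.nonempty_of_mem_parts hC).ne_empty, C, hC,
          Finset.sdiff_singleton_eq_self hnC⟩
    · rintro (rfl | ⟨hne, D, hD, rfl⟩)
      · exact h ▸ hP
      · by_cases hnD : (n+1) ∈ D
        · exact absurd (by rw [key D hD hnD, h]; simp) hne
        · rwa [Finset.sdiff_singleton_eq_self hnD]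
  · right
    have hPne : (P.erase (n+1)).Nonempty := by
      rw [Finset.nonempty_iff_ne_empty]
      intro hx
      rcases (Finset.erase_eq_empty_iff P (n+1)).1 hx with h1 | h1
      · exact (A.nonempty_of_mem_parts hP).ne_empty h1
      · exact h h1
    have hB : P.erase (n+1) ∈ (res A).parts := by
      rw [res_parts]
      refine Finset.mem_erase.2 ⟨hPne.ne_empty, Finset.mem_image.2 ⟨P, hP, ?_⟩⟩
      rw [Finset.sdiff_singleton_eq_erase]
    refine ⟨P.erase (n+1), hB, ?_⟩
    apply Finpartition.ext
    rw [extSome_parts, Finset.insert_erase hnP]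
    have herase : (res A).parts.erase (P.erase (n+1)) = A.parts.erase P := by
      ext C
      rw [res_parts]
      simp only [Finset.mem_erase, Finset.mem_image]
      constructor
      · rintro ⟨hCB, hne, D, hD, rfl⟩
        by_cases hnD : (n+1) ∈ D
        · exact absurd (by rw [key D hD hnD, Finset.sdiff_singleton_eq_erase]) hCB
        · rw [Finset.sdiff_singleton_eq_self hnD]
          exact ⟨fun hx => hnD (hx ▸ hnP), hD⟩
      · rintro ⟨hCP, hC⟩
        have hnC : (n+1) ∉ C := fun hx => hCP (key C hC hx)
        refine ⟨?_, (A.nonempty_of_mem_parts hC).ne_empty, C, hC,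
          Finset.sdiff_singleton_eq_self hnC⟩
        intro hx
        rcases hPne with ⟨y, hy⟩
        exact hCP (A.eq_of_mem_parts hC hP (hx ▸ hy) (Finset.mem_of_mem_erase hy))
    rw [herase, Finset.insert_erase hP]

lemma extNone_ne_extSome (A : Finpartition (Finset.Icc 1 n)) (B : Finset ℕ)
    (hB : B ∈ A.parts) : extNone A ≠ extSome A B hB := by
  intro h
  have h1 : ({n+1} : Finset ℕ) ∈ (extSome A B hB).parts := by
    rw [← h, extNone_parts]; exact Finset.mem_insert_self _ _
  rw [extSome_parts] at h1
  rcases Finset.mem_insert.1 h1 with h2 | h2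
  · rcases A.nonempty_of_mem_parts hB with ⟨x, hx⟩
    have hx1 : x ∈ ({n+1} : Finset ℕ) := h2 ▸ Finset.mem_insert_of_mem hx
    rw [Finset.mem_singleton] at hx1
    exact not_succ_mem_part hB (hx1 ▸ hx)
  · exact not_succ_mem_part (Finset.mem_of_mem_erase h2) (Finset.mem_singleton_self _)

lemma extSome_inj (A : Finpartition (Finset.Icc 1 n)) (B B' : Finset ℕ)
    (hB : B ∈ A.parts) (hB' : B' ∈ A.parts)
    (h : extSome A B hB = extSome A B' hB') : B = B' := by
  have h1 : insert (n+1) B ∈ (extSome A B' hB').parts := by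
    rw [← h, extSome_parts]; exact Finset.mem_insert_self _ _
  rw [extSome_parts] at h1
  rcases Finset.mem_insert.1 h1 with h2 | h2
  · have e1 : B = (insert (n+1) B).erase (n+1) :=
      (Finset.erase_insert (not_succ_mem_part hB)).symm
    rw [e1, h2, Finset.erase_insert (not_succ_mem_part hB')]
  · exact absurd (Finset.mem_insert_self _ _)
      (not_succ_mem_part (Finset.mem_of_mem_erase h2))

end Aux2

section Aux3
open Finpartition

variable {n : ℕ}

lemma mem_arcs {A : Finpartition (Finset.Icc 1 n)} {p : ℕ × ℕ} :
    p ∈ arcs n A ↔ p.1 ∈ Finset.Icc 1 n ∧ p.2 ∈ Finset.Icc 1 n ∧ p.1 < p.2 ∧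
      ∃ B ∈ A.parts, p.1 ∈ B ∧ p.2 ∈ B ∧ ∀ k ∈ B, ¬ (p.1 < k ∧ k < p.2) := by
  unfold arcs
  rw [Finset.mem_filter, Finset.mem_product]
  tauto

lemma arcs_bounds {A : Finpartition (Finset.Icc 1 n)} {p : ℕ × ℕ} (hp : p ∈ arcs n A) :
    1 ≤ p.1 ∧ p.1 < p.2 ∧ p.2 ≤ n := by
  rcases mem_arcs.1 hp with ⟨h1, h2, h3, -⟩
  rw [Finset.mem_Icc] at h1 h2
  exact ⟨h1.1, h3, h2.2⟩

lemma arcs_extNone (A : Finpartition (Finset.Icc 1 n)) :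
    arcs (n+1) (extNone A) = arcs n A := by
  ext p
  rw [mem_arcs, mem_arcs]
  constructor
  · rintro ⟨h1, h2, h3, B, hBmem, hp1, hp2, hbet⟩
    rw [extNone_parts, Finset.mem_insert] at hBmem
    rcases hBmem with rfl | hBmem
    · rw [Finset.mem_singleton] at hp1 hp2
      omega
    · exact ⟨part_subset_ground hBmem hp1, part_subset_ground hBmem hp2, h3,
        B, hBmem, hp1, hp2, hbet⟩
  · rintro ⟨h1, h2, h3, B, hBmem, hp1, hp2, hbet⟩
    have hsub : Finset.Icc 1 n ⊆ Finset.Icc 1 (n+1) := Finset.Icc_subset_Icc_right (by omega)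
    refine ⟨hsub h1, hsub h2, h3, B, ?_, hp1, hp2, hbet⟩
    rw [extNone_parts]
    exact Finset.mem_insert_of_mem hBmem

lemma arcs_extSome (A : Finpartition (Finset.Icc 1 n)) (B : Finset ℕ) (hB : B ∈ A.parts) :
    arcs (n+1) (extSome A B hB)
      = insert (B.max' (A.nonempty_of_mem_parts hB), n+1) (arcs n A) := by
  set b := B.max' (A.nonempty_of_mem_parts hB) with hbdef
  have hbB : b ∈ B := B.max'_mem _
  have hble : ∀ x ∈ B, x ≤ b := fun x hx => B.le_max' x hx
  have hbI : b ∈ Finset.Icc 1 n := part_subset_ground hB hbB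
  have hb1 : 1 ≤ b := (Finset.mem_Icc.1 hbI).1
  have hbn : b ≤ n := (Finset.mem_Icc.1 hbI).2
  have hsub : Finset.Icc 1 n ⊆ Finset.Icc 1 (n+1) := Finset.Icc_subset_Icc_right (by omega)
  ext p
  rw [Finset.mem_insert, mem_arcs, mem_arcs]
  constructor
  · rintro ⟨h1, h2, h3, C, hCmem, hp1, hp2, hbet⟩
    rw [extSome_parts, Finset.mem_insert] at hCmem
    rcases hCmem with rfl | hCmem
    · rw [Finset.mem_insert] at hp1 hp2
      rcases hp2 with hp2 | hp2
      · -- p.2 = n+1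
        left
        have hp1B : p.1 ∈ B := by
          rcases hp1 with hp1 | hp1
          · omega
          · exact hp1
        have hble' : b ≤ p.1 := by
          by_contra hlt
          exact hbet b (Finset.mem_insert_of_mem hbB) ⟨by omega, by omega⟩
        have : p.1 = b := le_antisymm (hble _ hp1B) hble'
        rw [Prod.ext_iff]
        exact ⟨this, hp2⟩
      · -- p.2 ∈ B
        right
        have hp2n : p.2 ≤ n := (Finset.mem_Icc.1 (part_subset_ground hB hp2)).2
        have hp1B : p.1 ∈ B := by
          rcases hp1 with hp1 | hp1
          · omega
          · exact hp1
        exact ⟨part_subset_ground hB hp1B, part_subset_ground hB hp2, h3,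
          B, hB, hp1B, hp2, fun k hk => hbet k (Finset.mem_insert_of_mem hk)⟩
    · right
      have hC : C ∈ A.parts := Finset.mem_of_mem_erase hCmem
      exact ⟨part_subset_ground hC hp1, part_subset_ground hC hp2, h3, C, hC, hp1, hp2, hbet⟩
  · rintro (rfl | hp)
    · refine ⟨hsub hbI, succ_mem_ground_succ n, by simpa using Nat.lt_succ_of_le hbn,
        insert (n+1) B, ?_, ?_, ?_, ?_⟩
      · rw [extSome_parts]; exact Finset.mem_insert_self _ _
      · exact Finset.mem_insert_of_mem hbB
      · exact Finset.mem_insert_self _ _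
      · intro k hk
        rcases Finset.mem_insert.1 hk with rfl | hk
        · simp
        · have := hble k hk
          simp only [not_and]; omega
    · rcases hp with ⟨h1, h2, h3, C, hC, hp1, hp2, hbet⟩
      have hp2n : p.2 ≤ n := (Finset.mem_Icc.1 h2).2
      by_cases hCB : C = B
      · subst hCB
        refine ⟨hsub h1, hsub h2, h3, insert (n+1) C, ?_, Finset.mem_insert_of_mem hp1,
          Finset.mem_insert_of_mem hp2, ?_⟩
        · rw [extSome_parts]; exact Finset.mem_insert_self _ _
        · intro k hk
          rcases Finset.mem_insert.1 hk with rfl | hk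
          · simp only [not_and]; omega
          · exact hbet k hk
      · refine ⟨hsub h1, hsub h2, h3, C, ?_, hp1, hp2, hbet⟩
        rw [extSome_parts]
        exact Finset.mem_insert_of_mem (Finset.mem_erase_of_ne_of_mem hCB hC)

lemma new_arc_not_mem (A : Finpartition (Finset.Icc 1 n)) (b : ℕ) :
    (b, n+1) ∉ arcs n A := fun h => by
  have := (arcs_bounds h).2.2
  simp at this

end Aux3

section Aux4
open Finpartition

variable {n : ℕ}

lemma arcs_fst_injOn {A : Finpartition (Finset.Icc 1 n)} {p q : ℕ × ℕ}
    (hp : p ∈ arcs n A) (hq : q ∈ arcs n A) (h : p.1 = q.1) : p = q := by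
  rcases mem_arcs.1 hp with ⟨-, -, hlt, B, hB, hp1, hp2, hbet⟩
  rcases mem_arcs.1 hq with ⟨-, -, hlt', C, hC, hq1, hq2, hbet'⟩
  have hBC : B = C := A.eq_of_mem_parts hB hC hp1 (h ▸ hq1)
  subst hBC
  have h2 : p.2 = q.2 := by
    by_contra hne
    rcases Nat.lt_or_ge p.2 q.2 with hlt2 | hge
    · exact hbet' p.2 hp2 ⟨h ▸ hlt, hlt2⟩
    · have : q.2 < p.2 := lt_of_le_of_ne hge (Ne.symm hne)
      exact hbet q.2 hq2 ⟨h ▸ hlt', this⟩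
  exact Prod.ext h h2

lemma max'_not_fst {A : Finpartition (Finset.Icc 1 n)} {B : Finset ℕ} (hB : B ∈ A.parts)
    {p : ℕ × ℕ} (hp : p ∈ arcs n A) :
    p.1 ≠ B.max' (A.nonempty_of_mem_parts hB) := by
  intro h
  rcases mem_arcs.1 hp with ⟨-, -, hlt, C, hC, hp1, hp2, -⟩
  have hmem : p.1 ∈ B := h ▸ B.max'_mem _
  have hBC : C = B := A.eq_of_mem_parts hC hB hp1 hmem
  have : p.2 ≤ B.max' (A.nonempty_of_mem_parts hB) := B.le_max' _ (hBC ▸ hp2)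
  omega

lemma card_arcs_add_card_parts (A : Finpartition (Finset.Icc 1 n)) :
    (arcs n A).card + A.parts.card = n := by
  classical
  set M := (Finset.Icc 1 n).filter
    (fun i => ∃ B ∈ A.parts, i ∈ B ∧ ∀ x ∈ B, x ≤ i) with hM
  have himg : (arcs n A).image Prod.fst = Finset.Icc 1 n \ M := by
    ext i
    simp only [Finset.mem_image, Finset.mem_sdiff, hM, Finset.mem_filter]
    constructor
    · rintro ⟨p, hp, rfl⟩
      rcases mem_arcs.1 hp with ⟨h1, -, hlt, B, hB, hp1, hp2, -⟩
      refine ⟨h1, ?_⟩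
      rintro ⟨-, C, hC, hiC, hmax⟩
      have hBC : B = C := A.eq_of_mem_parts hB hC hp1 hiC
      have := hmax p.2 (hBC ▸ hp2)
      omega
    · rintro ⟨hi, hnm⟩
      push_neg at hnm
      set C := A.part i with hC
      have hCp : C ∈ A.parts := A.part_mem.2 hi
      have hiC : i ∈ C := A.mem_part hi
      rcases hnm hi C hCp hiC with ⟨j, hj, hij⟩
      have hSne : (C.filter (fun x => i < x)).Nonempty :=
        ⟨j, Finset.mem_filter.2 ⟨hj, hij⟩⟩
      set j0 := (C.filter (fun x => i < x)).min' hSne with hj0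
      have hj0mem := (C.filter (fun x => i < x)).min'_mem hSne
      rw [Finset.mem_filter] at hj0mem
      refine ⟨(i, j0), ?_, rfl⟩
      rw [mem_arcs]
      refine ⟨hi, part_subset_ground hCp hj0mem.1, hj0mem.2, C, hCp, hiC, hj0mem.1, ?_⟩
      intro k hk ⟨hik, hkj⟩
      have : j0 ≤ k := (C.filter (fun x => i < x)).min'_le k (Finset.mem_filter.2 ⟨hk, hik⟩)
      omega
  have hcard1 : (arcs n A).card = ((arcs n A).image Prod.fst).card := by
    rw [Finset.card_image_of_injOn]
    intro p hp q hq h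
    exact arcs_fst_injOn hp hq h
  have hMsub : M ⊆ Finset.Icc 1 n := Finset.filter_subset _ _
  have hMcard : M.card = A.parts.card := by
    symm
    apply Finset.card_bij (fun B hB => B.max' (A.nonempty_of_mem_parts hB))
    · intro B hB
      have hmem := B.max'_mem (A.nonempty_of_mem_parts hB)
      rw [hM, Finset.mem_filter]
      exact ⟨part_subset_ground hB hmem, B, hB, hmem, fun x hx => B.le_max' x hx⟩
    · intro B hB C hC h
      exact A.eq_of_mem_parts hB hC (h ▸ B.max'_mem _) (C.max'_mem _)
    · intro i hi
      rw [hM, Finset.mem_filter] at hi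
      rcases hi with ⟨-, B, hB, hiB, hmax⟩
      refine ⟨B, hB, le_antisymm (hmax _ (B.max'_mem _)) (B.le_max' i hiB)⟩
  have hsd : (Finset.Icc 1 n \ M).card = n - M.card := by
    rw [Finset.card_sdiff_of_subset hMsub, Nat.card_Icc]
    omega
  rw [himg] at hcard1
  have hMn : M.card ≤ n := by
    calc M.card ≤ (Finset.Icc 1 n).card := Finset.card_le_card hMsub
    _ = n := by rw [Nat.card_Icc]; omega
  omega

lemma fst_injOn_filter {A : Finpartition (Finset.Icc 1 n)} (P : ℕ × ℕ → Prop)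
    [DecidablePred P] :
    Set.InjOn Prod.fst (((arcs n A).filter P : Finset (ℕ × ℕ)) : Set (ℕ × ℕ)) := by
  intro p hp q hq h
  exact arcs_fst_injOn (Finset.mem_of_mem_filter _ hp) (Finset.mem_of_mem_filter _ hq) h

end Aux4

section Aux5
open Finpartition

variable {n : ℕ}

/-- The maximum of a block (as a subtype element). -/
noncomputable def bmax (A : Finpartition (Finset.Icc 1 n)) (B : {x // x ∈ A.parts}) : ℕ :=
  B.1.max' (A.nonempty_of_mem_parts B.2)

/-- The value of a block: its max plus the number of arcs strictly to the right. -/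
noncomputable def valB (A : Finpartition (Finset.Icc 1 n)) (B : {x // x ∈ A.parts}) : ℕ :=
  bmax A B + ((arcs n A).filter (fun p => bmax A B < p.1)).card

lemma bmax_mem (A : Finpartition (Finset.Icc 1 n)) (B : {x // x ∈ A.parts}) :
    bmax A B ∈ B.1 := B.1.max'_mem _

lemma bmax_bounds (A : Finpartition (Finset.Icc 1 n)) (B : {x // x ∈ A.parts}) :
    1 ≤ bmax A B ∧ bmax A B ≤ n := by
  have := part_subset_ground B.2 (bmax_mem A B)
  rw [Finset.mem_Icc] at this
  exact this

lemma valB_lt_valB (A : Finpartition (Finset.Icc 1 n)) (B C : {x // x ∈ A.parts})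
    (hbc : bmax A B < bmax A C) : valB A B < valB A C := by
  classical
  set b := bmax A B with hb
  set c := bmax A C with hc
  have hsplit : (arcs n A).filter (fun p => b < p.1)
      = ((arcs n A).filter (fun p => c < p.1))
        ∪ ((arcs n A).filter (fun p => b < p.1 ∧ p.1 ≤ c)) := by
    ext p
    simp only [Finset.mem_filter, Finset.mem_union]
    constructor
    · rintro ⟨hp, hbp⟩
      by_cases hcp : c < p.1
      · exact Or.inl ⟨hp, hcp⟩
      · exact Or.inr ⟨hp, hbp, by omega⟩
    · rintro (⟨hp, h⟩ | ⟨hp, h1, h2⟩)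
      · exact ⟨hp, by omega⟩
      · exact ⟨hp, h1⟩
  have hdisj : Disjoint ((arcs n A).filter (fun p => c < p.1))
      ((arcs n A).filter (fun p => b < p.1 ∧ p.1 ≤ c)) := by
    rw [Finset.disjoint_left]
    intro p hp hq
    rw [Finset.mem_filter] at hp hq
    omega
  have hcnt : ((arcs n A).filter (fun p => b < p.1)).card
      = ((arcs n A).filter (fun p => c < p.1)).card
        + ((arcs n A).filter (fun p => b < p.1 ∧ p.1 ≤ c)).card := by
    rw [hsplit, Finset.card_union_of_disjoint hdisj]
  have hd : ((arcs n A).filter (fun p => b < p.1 ∧ p.1 ≤ c)).card ≤ c - b - 1 := by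
    have hle := Finset.card_le_card_of_injOn (f := Prod.fst)
      (s := (arcs n A).filter (fun p => b < p.1 ∧ p.1 ≤ c))
      (t := (Finset.Ioc b c).erase c)
      (fun p hp => by
        rw [Finset.mem_coe, Finset.mem_filter] at hp
        refine Finset.mem_erase.2 ⟨max'_not_fst C.2 hp.1, Finset.mem_Ioc.2 ⟨hp.2.1, hp.2.2⟩⟩)
      (fst_injOn_filter _)
    rwa [Finset.card_erase_of_mem (Finset.mem_Ioc.2 ⟨hbc, le_refl c⟩), Nat.card_Ioc] at hle
  rw [valB, valB, ← hb, ← hc, hcnt]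
  omega

lemma valB_le (A : Finpartition (Finset.Icc 1 n)) (B : {x // x ∈ A.parts}) :
    valB A B ≤ n := by
  classical
  set b := bmax A B with hb
  have hble := (bmax_bounds A B).2
  have hle := Finset.card_le_card_of_injOn (f := Prod.fst)
    (s := (arcs n A).filter (fun p => b < p.1))
    (t := (Finset.Ioc b n).erase n)
    (fun p hp => by
      rw [Finset.mem_coe, Finset.mem_filter] at hp
      have hbd := arcs_bounds hp.1
      exact Finset.mem_erase.2 ⟨by omega, Finset.mem_Ioc.2 ⟨hp.2, by omega⟩⟩)
    (fst_injOn_filter _)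
  rw [valB, ← hb]
  by_cases hbn : b < n
  · rw [Finset.card_erase_of_mem (Finset.mem_Ioc.2 ⟨hbn, le_refl n⟩), Nat.card_Ioc] at hle
    omega
  · have hempty : (arcs n A).filter (fun p => b < p.1) = ∅ := by
      rw [Finset.eq_empty_iff_forall_notMem]
      intro p hp
      rw [Finset.mem_filter] at hp
      have := arcs_bounds hp.1
      omega
    rw [hempty]
    simp
    omega

lemma valB_ge (A : Finpartition (Finset.Icc 1 n)) (B : {x // x ∈ A.parts}) :
    (arcs n A).card + 1 ≤ valB A B := by
  classical
  set b := bmax A B with hb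
  have hb1 := (bmax_bounds A B).1
  have hsplit := Finset.card_filter_add_card_filter_not
    (s := arcs n A) (p := fun p => b < p.1)
  have hle : ((arcs n A).filter (fun p => ¬ b < p.1)).card ≤ b - 1 := by
    have h := Finset.card_le_card_of_injOn (f := Prod.fst)
      (s := (arcs n A).filter (fun p => ¬ b < p.1))
      (t := (Finset.Icc 1 b).erase b)
      (fun p hp => by
        rw [Finset.mem_coe, Finset.mem_filter] at hp
        have hbd := arcs_bounds hp.1
        exact Finset.mem_erase.2 ⟨max'_not_fst B.2 hp.1, Finset.mem_Icc.2 ⟨by omega, by omega⟩⟩)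
      (fst_injOn_filter _)
    rwa [Finset.card_erase_of_mem (Finset.mem_Icc.2 ⟨hb1, le_refl b⟩), Nat.card_Icc] at h
  rw [valB, ← hb]
  omega

lemma sum_valB (A : Finpartition (Finset.Icc 1 n)) (f : ℕ → ℚ) :
    ∑ B ∈ A.parts.attach, f (valB A B)
      = ∑ k ∈ Finset.Icc ((arcs n A).card + 1) n, f k := by
  classical
  have hinj : Set.InjOn (valB A) (A.parts.attach : Set {x // x ∈ A.parts}) := by
    intro B hB C hC h
    by_contra hne
    have hbne : bmax A B ≠ bmax A C := by
      intro heq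
      apply hne
      apply Subtype.ext
      exact A.eq_of_mem_parts B.2 C.2 (bmax_mem A B) (heq ▸ bmax_mem A C)
    rcases Nat.lt_or_ge (bmax A B) (bmax A C) with hlt | hge
    · exact absurd h (Nat.ne_of_lt (valB_lt_valB A B C hlt))
    · exact absurd h.symm (Nat.ne_of_lt (valB_lt_valB A C B (by omega)))
  have himg : A.parts.attach.image (valB A) = Finset.Icc ((arcs n A).card + 1) n := by
    apply Finset.eq_of_subset_of_card_le
    · intro k hk
      rcases Finset.mem_image.1 hk with ⟨B, hB, rfl⟩
      exact Finset.mem_Icc.2 ⟨valB_ge A B, valB_le A B⟩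
    · rw [Finset.card_image_of_injOn hinj, Finset.card_attach, Nat.card_Icc]
      have := card_arcs_add_card_parts A
      omega
  rw [← himg, Finset.sum_image (fun x hx y hy h => hinj hx hy h)]

end Aux5

section Aux6
open Finpartition

variable {n : ℕ}

lemma card_filter_insert {a : ℕ × ℕ} {s : Finset (ℕ × ℕ)} (h : a ∉ s)
    (p : ℕ × ℕ → Prop) [DecidablePred p] :
    ((insert a s).filter p).card = (s.filter p).card + (if p a then 1 else 0) := by
  rw [Finset.filter_insert]
  split
  · rw [Finset.card_insert_of_notMem (fun hx => h (Finset.mem_of_mem_filter _ hx))]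
  · rw [Nat.add_zero]

lemma sum_shift (m : ℕ) (c : ℤ) :
    ∑ i ∈ Finset.Icc 1 m, (c + 1 - (i : ℤ))
      = (∑ i ∈ Finset.Icc 1 m, (c - (i : ℤ))) + m := by
  have : ∀ i ∈ Finset.Icc 1 m, c + 1 - (i : ℤ) = (c - i) + 1 := fun i _ => by ring
  rw [Finset.sum_congr rfl this, Finset.sum_add_distrib, Finset.sum_const, Nat.card_Icc]
  simp

lemma depthIndex_extNone (A : Finpartition (Finset.Icc 1 n)) :
    depthIndex (n+1) (extNone A) = depthIndex n A + (arcs n A).card := by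
  unfold depthIndex
  rw [arcs_extNone]
  have h1 : ∑ i ∈ Finset.Icc 1 (arcs n A).card, (((n+1 : ℕ) : ℤ) - i)
      = (∑ i ∈ Finset.Icc 1 (arcs n A).card, ((n : ℤ) - i)) + (arcs n A).card := by
    have := sum_shift (arcs n A).card (n : ℤ)
    push_cast at this ⊢
    linarith [this]
  have hvz : vertexDepth (n+1) (extNone A) (n+1) = 0 := by
    unfold vertexDepth
    rw [arcs_extNone, Finset.card_eq_zero, Finset.eq_empty_iff_forall_notMem]
    intro p hp
    rw [Finset.mem_filter] at hp
    have := arcs_bounds hp.1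
    omega
  have h2 : ∑ v ∈ Finset.Icc 1 (n+1), (vertexDepth (n+1) (extNone A) v : ℤ)
      = ∑ v ∈ Finset.Icc 1 n, (vertexDepth n A v : ℤ) := by
    rw [ground_succ n, Finset.sum_insert (succ_not_mem_ground n), hvz]
    have : ∀ v ∈ Finset.Icc 1 n, (vertexDepth (n+1) (extNone A) v : ℤ)
        = (vertexDepth n A v : ℤ) := by
      intro v _
      unfold vertexDepth
      rw [arcs_extNone]
    rw [Finset.sum_congr rfl this]
    simp
  have h3 : ∑ α ∈ arcs n A, (arcDepth (n+1) (extNone A) α : ℤ)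
      = ∑ α ∈ arcs n A, (arcDepth n A α : ℤ) := by
    apply Finset.sum_congr rfl
    intro α _
    unfold arcDepth
    rw [arcs_extNone]
  rw [h1, h2, h3]
  ring

lemma depthIndex_extSome (A : Finpartition (Finset.Icc 1 n)) (B : Finset ℕ)
    (hB : B ∈ A.parts) :
    depthIndex (n+1) (extSome A B hB) = depthIndex n A + (valB A ⟨B, hB⟩ : ℤ) := by
  classical
  set b := B.max' (A.nonempty_of_mem_parts hB) with hbdef
  have hb1 : 1 ≤ b := (bmax_bounds A ⟨B, hB⟩).1
  have hbn : b ≤ n := (bmax_bounds A ⟨B, hB⟩).2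
  set S := arcs n A with hSdef
  have hnm : (b, n+1) ∉ S := new_arc_not_mem A b
  have harcs : arcs (n+1) (extSome A B hB) = insert (b, n+1) S := arcs_extSome A B hB
  have hcard : (arcs (n+1) (extSome A B hB)).card = S.card + 1 := by
    rw [harcs, Finset.card_insert_of_notMem hnm]
  unfold depthIndex
  rw [hcard, harcs]
  -- Term 1
  have h1 : ∑ i ∈ Finset.Icc 1 (S.card + 1), (((n+1 : ℕ) : ℤ) - i)
      = (∑ i ∈ Finset.Icc 1 S.card, ((n : ℤ) - i)) + (n : ℤ) := by
    rw [ground_succ S.card, Finset.sum_insert (succ_not_mem_ground S.card)]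
    have := sum_shift S.card (n : ℤ)
    push_cast at this ⊢
    linarith [this]
  -- Term 2
  have hvz : ((insert (b, n+1) S).filter
      (fun p => p.1 < (n+1) ∧ (n+1) < p.2)).card = 0 := by
    rw [Finset.card_eq_zero, Finset.eq_empty_iff_forall_notMem]
    intro p hp
    rw [Finset.mem_filter, Finset.mem_insert] at hp
    rcases hp.1 with rfl | hpS
    · omega
    · have := arcs_bounds hpS
      omega
  have h2 : ∑ v ∈ Finset.Icc 1 (n+1),
        (vertexDepth (n+1) (extSome A B hB) v : ℤ)
      = (∑ v ∈ Finset.Icc 1 n, (vertexDepth n A v : ℤ)) + ((n : ℤ) - b) := by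
    unfold vertexDepth
    rw [harcs, ground_succ n, Finset.sum_insert (succ_not_mem_ground n), hvz]
    have hpt : ∀ v ∈ Finset.Icc 1 n,
        (((insert (b, n+1) S).filter (fun p => p.1 < v ∧ v < p.2)).card : ℤ)
          = ((S.filter (fun p => p.1 < v ∧ v < p.2)).card : ℤ)
            + (if b < v ∧ v < n+1 then (1:ℤ) else 0) := by
      intro v _
      rw [card_filter_insert hnm]
      push_cast
      split <;> simp
    rw [Finset.sum_congr rfl hpt, Finset.sum_add_distrib]
    have hsum2 : ∑ v ∈ Finset.Icc 1 n, (if b < v ∧ v < n+1 then (1:ℤ) else 0)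
        = ((n : ℤ) - b) := by
      rw [Finset.sum_boole]
      have : (Finset.Icc 1 n).filter (fun v => b < v ∧ v < n+1) = Finset.Ioc b n := by
        ext x
        simp only [Finset.mem_filter, Finset.mem_Icc, Finset.mem_Ioc]
        omega
      rw [this, Nat.card_Ioc]
      push_cast [Nat.cast_sub hbn]
      ring
    rw [hsum2]
    push_cast
    ring
  -- Term 3
  have haz : ((insert (b, n+1) S).filter
      (fun p => p.1 < b ∧ (n+1) < p.2)).card = 0 := by
    rw [Finset.card_eq_zero, Finset.eq_empty_iff_forall_notMem]
    intro p hp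
    rw [Finset.mem_filter, Finset.mem_insert] at hp
    rcases hp.1 with rfl | hpS
    · omega
    · have := arcs_bounds hpS
      omega
  have h3 : ∑ α ∈ insert (b, n+1) S,
        (arcDepth (n+1) (extSome A B hB) α : ℤ)
      = (∑ α ∈ S, (arcDepth n A α : ℤ))
        + ((S.filter (fun p => b < p.1)).card : ℤ) := by
    unfold arcDepth
    rw [harcs, Finset.sum_insert hnm]
    have : (((insert (b, n+1) S).filter
        (fun p => p.1 < (b, n+1).1 ∧ (b, n+1).2 < p.2)).card : ℤ) = 0 := by
      norm_cast
    rw [this, zero_add]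
    have hpt : ∀ α ∈ S,
        (((insert (b, n+1) S).filter (fun p => p.1 < α.1 ∧ α.2 < p.2)).card : ℤ)
          = ((S.filter (fun p => p.1 < α.1 ∧ α.2 < p.2)).card : ℤ)
            + (if b < α.1 then (1:ℤ) else 0) := by
      intro α hα
      rw [card_filter_insert hnm]
      have hα2 : α.2 ≤ n := (arcs_bounds hα).2.2
      push_cast
      have : (b < α.1 ∧ α.2 < n+1) ↔ b < α.1 := by omega
      rw [if_congr this rfl rfl]
    rw [Finset.sum_congr rfl hpt, Finset.sum_add_distrib, Finset.sum_boole]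
  rw [h1, h2, h3]
  have hval : (valB A ⟨B, hB⟩ : ℤ)
      = (b : ℤ) + ((S.filter (fun p => b < p.1)).card : ℤ) := by
    have hrfl : valB A ⟨B, hB⟩ = b + (S.filter (fun p => b < p.1)).card := rfl
    rw [hrfl]
    push_cast
    ring
  rw [hval]
  push_cast
  ring

end Aux6

section Aux7
open Finpartition

variable {n : ℕ}

lemma telescope_pow (q : ℚ) (hq : q ≠ 0) (m : ℕ) :
    ∀ N, m ≤ N → q ^ m + (1 - q⁻¹) * ∑ k ∈ Finset.Icc (m+1) N, q ^ k = q ^ N := by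
  intro N
  induction N with
  | zero =>
    intro hm
    interval_cases m
    simp
  | succ N ih =>
    intro hm
    by_cases hmN : m = N + 1
    · subst hmN
      rw [Finset.Icc_eq_empty (by omega)]
      simp
    · have hm' : m ≤ N := by omega
      have hIcc : Finset.Icc (m+1) (N+1) = insert (N+1) (Finset.Icc (m+1) N) := by
        ext x
        simp only [Finset.mem_Icc, Finset.mem_insert]
        omega
      have hnotmem : (N+1) ∉ Finset.Icc (m+1) N := by
        simp only [Finset.mem_Icc]
        omega
      rw [hIcc, Finset.sum_insert hnotmem]
      have hstep : (1 - q⁻¹) * q ^ (N+1) = q ^ (N+1) - q ^ N := by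
        field_simp
        ring
      have := ih hm'
      rw [mul_add, hstep]
      linarith [this]

lemma fiber_eq (A' : Finpartition (Finset.Icc 1 n)) :
    (Finset.univ : Finset (Finpartition (Finset.Icc 1 (n+1)))).filter
        (fun A => res A = A')
      = insert (extNone A')
          (A'.parts.attach.image (fun B => extSome A' B.1 B.2)) := by
  ext A
  simp only [Finset.mem_filter, Finset.mem_univ, true_and, Finset.mem_insert,
    Finset.mem_image]
  constructor
  · rintro rfl
    rcases ext_res A with h | ⟨B, hB, h⟩
    · exact Or.inl h
    · exact Or.inr ⟨⟨B, hB⟩, Finset.mem_attach _ _, h.symm⟩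
  · rintro (rfl | ⟨B, -, rfl⟩)
    · exact res_extNone A'
    · exact res_extSome A' B.1 B.2

lemma extNone_not_mem_image (A' : Finpartition (Finset.Icc 1 n)) :
    extNone A' ∉ A'.parts.attach.image (fun B => extSome A' B.1 B.2) := by
  intro h
  rcases Finset.mem_image.1 h with ⟨B, -, hB⟩
  exact extNone_ne_extSome A' B.1 B.2 hB.symm

lemma triangle_succ (m : ℕ) : (m+1) * m / 2 = m * (m-1) / 2 + m := by
  cases m with
  | zero => rfl
  | succ k =>
    rcases Nat.even_mul_succ_self k with ⟨j, hj⟩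
    have e1 : (k+1+1) * (k+1) = k * (k+1) + 2 * (k+1) := by ring
    have e2 : (k+1) * k = k * (k+1) := by ring
    simp only [Nat.succ_sub_one]
    omega

lemma main_aux : ∀ (n : ℕ) (q : ℚ), q ≠ 0 →
    ∑ A : Finpartition (Finset.Icc 1 n),
        q ^ depthIndex n A * (1 - q⁻¹) ^ (arcs n A).card
      = q ^ (n * (n - 1) / 2) := by
  intro n
  induction n with
  | zero =>
    intro q hq
    have hIcc : (Finset.Icc 1 0 : Finset ℕ) = ∅ := by simp
    have harcs : ∀ A : Finpartition (Finset.Icc 1 0), arcs 0 A = ∅ := by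
      intro A
      rw [Finset.eq_empty_iff_forall_notMem]
      intro p hp
      have := arcs_bounds hp
      omega
    have hsummand : ∀ A : Finpartition (Finset.Icc 1 0),
        q ^ depthIndex 0 A * (1 - q⁻¹) ^ (arcs 0 A).card = 1 := by
      intro A
      have ht : depthIndex 0 A = 0 := by
        unfold depthIndex
        rw [harcs A]
        simp [hIcc]
      rw [ht, harcs A]
      simp
    rw [Finset.sum_congr rfl (fun A _ => hsummand A)]
    have hcard : Fintype.card (Finpartition (Finset.Icc 1 0)) = 1 := by
      rw [Fintype.card_eq_one_iff]
      refine ⟨⊥, fun A => ?_⟩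
      apply Finpartition.ext
      have h1 : A.parts = ∅ := Finpartition.parts_eq_empty_iff.2 (by simp [hIcc])
      have h2 : (⊥ : Finpartition (Finset.Icc 1 0)).parts = ∅ :=
        Finpartition.parts_eq_empty_iff.2 (by simp [hIcc])
      rw [h1, h2]
    rw [Finset.sum_const, Finset.card_univ, hcard]
    simp
  | succ n ih =>
    intro q hq
    have hS : ∑ A : Finpartition (Finset.Icc 1 (n+1)),
        q ^ depthIndex (n+1) A * (1 - q⁻¹) ^ (arcs (n+1) A).card
      = ∑ A' : Finpartition (Finset.Icc 1 n),
          ∑ A ∈ Finset.univ.filter (fun A => res A = A'),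
            q ^ depthIndex (n+1) A * (1 - q⁻¹) ^ (arcs (n+1) A).card := by
      rw [Finset.sum_fiberwise_of_maps_to (fun A _ => Finset.mem_univ (res A))]
    rw [hS]
    have hinner : ∀ A' : Finpartition (Finset.Icc 1 n),
        ∑ A ∈ Finset.univ.filter (fun A => res A = A'),
            q ^ depthIndex (n+1) A * (1 - q⁻¹) ^ (arcs (n+1) A).card
          = (q ^ depthIndex n A' * (1 - q⁻¹) ^ (arcs n A').card) * q ^ n := by
      intro A'
      set m := (arcs n A').card with hm
      set t := depthIndex n A' with ht
      set c := (1 - q⁻¹) with hc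
      have hmn : m ≤ n := by
        have := card_arcs_add_card_parts A'
        omega
      rw [fiber_eq A', Finset.sum_insert (extNone_not_mem_image A'),
        Finset.sum_image (fun B _ C _ h =>
          Subtype.ext (extSome_inj A' B.1 C.1 B.2 C.2 h))]
      have hwnone : q ^ depthIndex (n+1) (extNone A')
            * c ^ (arcs (n+1) (extNone A')).card
          = q ^ t * c ^ m * q ^ m := by
        rw [depthIndex_extNone, arcs_extNone, zpow_add₀ hq, zpow_natCast]
        ring
      have hwsome : ∀ B : {x // x ∈ A'.parts},
          q ^ depthIndex (n+1) (extSome A' B.1 B.2)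
              * c ^ (arcs (n+1) (extSome A' B.1 B.2)).card
            = q ^ t * c ^ (m+1) * q ^ (valB A' B) := by
        intro B
        have hcard2 : (arcs (n+1) (extSome A' B.1 B.2)).card = m + 1 := by
          rw [arcs_extSome, Finset.card_insert_of_notMem (new_arc_not_mem A' _)]
        have hB : extSome A' B.1 B.2 = extSome A' B.1 B.2 := rfl
        have hdi : depthIndex (n+1) (extSome A' B.1 B.2) = t + (valB A' B : ℤ) := by
          rw [depthIndex_extSome]
        rw [hdi, hcard2, zpow_add₀ hq, zpow_natCast]
        ring
      rw [hwnone, Finset.sum_congr rfl (fun B _ => hwsome B), ← Finset.mul_sum,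
        sum_valB A' (fun k => q ^ k)]
      have htel := telescope_pow q hq m n hmn
      calc q ^ t * c ^ m * q ^ m
            + q ^ t * c ^ (m+1) * ∑ k ∈ Finset.Icc (m+1) n, q ^ k
          = q ^ t * c ^ m * (q ^ m + c * ∑ k ∈ Finset.Icc (m+1) n, q ^ k) := by
            rw [pow_succ]; ring
        _ = q ^ t * c ^ m * q ^ n := by rw [htel]
    rw [Finset.sum_congr rfl (fun A' _ => hinner A'), ← Finset.sum_mul, ih q hq]
    rw [← pow_add]
    congr 1
    have := triangle_succ n
    simpa using this.symm
end Aux7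

/-- For `n ≥ 1` and every nonzero rational `q`,
`Σ_{A ∈ Π_n} q^{t(A)} (1 − q⁻¹)^{a(A)} = q^{n(n−1)/2}`, where `a(A)` is the number of
arcs of `A`. -/
theorem sum_depthIndex_arcs_eq (n : ℕ) (hn : 1 ≤ n) (q : ℚ) (hq : q ≠ 0) :
    ∑ A : Finpartition (Finset.Icc 1 n),
        q ^ depthIndex n A * (1 - q⁻¹) ^ (arcs n A).card
      = q ^ (n * (n - 1) / 2) :=
  main_aux n q hq
end

section
/- Let n ≥ 1 and let A be a set partition of {1,…,n}. Then Σ_{v=1}^{n} depth(v) = Σ_{B block of A} (max B − min B + 1) − n; that is, the sum of the depths of the vertices equals the dimension exponent of A. -/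
open Finset
open scoped Classical

section Aux
variable {n : ℕ} {A : Finpartition (Finset.Icc 1 n)}

lemma mem_arcs_block {B : Finset ℕ} (hB : B ∈ A.parts) (p : ℕ × ℕ) :
    (p ∈ arcs n A ∧ p.1 ∈ B) ↔
      (p.1 ∈ B ∧ p.2 ∈ B ∧ p.1 < p.2 ∧ ∀ k ∈ B, ¬ (p.1 < k ∧ k < p.2)) := by
  constructor
  · rintro ⟨hp, h1⟩
    rw [arcs, mem_filter] at hp
    obtain ⟨-, hlt, C, hC, hC1, hC2, hCk⟩ := hp
    obtain rfl : B = C := A.eq_of_mem_parts hB hC h1 hC1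
    exact ⟨h1, hC2, hlt, hCk⟩
  · rintro ⟨h1, h2, hlt, hk⟩
    refine ⟨?_, h1⟩
    rw [arcs, mem_filter, mem_product]
    exact ⟨⟨A.le hB h1, A.le hB h2⟩, hlt, B, hB, h1, h2, hk⟩

lemma sum_snd_block {B : Finset ℕ} (hB : B ∈ A.parts) (hne : B.Nonempty)
    {M : Type*} [AddCommMonoid M] (f : ℕ → M) :
    ∑ p ∈ (arcs n A).filter (fun p => p.1 ∈ B), f p.2
      = ∑ j ∈ B.erase (B.min' hne), f j := by
  refine Finset.sum_bij (fun p _ => p.2) ?_ ?_ ?_ ?_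
  · intro p hp
    rw [mem_filter] at hp
    obtain ⟨h1, h2, hlt, hk⟩ := (mem_arcs_block hB p).1 ⟨hp.1, hp.2⟩
    show p.2 ∈ B.erase (B.min' hne)
    refine mem_erase.2 ⟨?_, h2⟩
    intro h
    have := B.min'_le p.1 h1
    omega
  · intro p hp q hq hpq
    rw [mem_filter] at hp hq
    obtain ⟨hp1, hp2, hplt, hpk⟩ := (mem_arcs_block hB p).1 ⟨hp.1, hp.2⟩
    obtain ⟨hq1, hq2, hqlt, hqk⟩ := (mem_arcs_block hB q).1 ⟨hq.1, hq.2⟩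
    have hpq : p.2 = q.2 := hpq
    have : p.1 = q.1 := by
      rcases lt_trichotomy p.1 q.1 with h | h | h
      · exact absurd ⟨h, by omega⟩ (hpk q.1 hq1)
      · exact h
      · exact absurd ⟨h, by omega⟩ (hqk p.1 hp1)
    exact Prod.ext this hpq
  · intro j hj
    rw [mem_erase] at hj
    have hmin : B.min' hne < j := lt_of_le_of_ne (B.min'_le j hj.2) (Ne.symm hj.1)
    have hT : (B.filter (· < j)).Nonempty :=
      ⟨B.min' hne, mem_filter.2 ⟨B.min'_mem hne, hmin⟩⟩
    set i := (B.filter (· < j)).max' hT with hi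
    have hiT := (B.filter (· < j)).max'_mem hT
    rw [mem_filter] at hiT
    refine ⟨(i, j), mem_filter.2 ?_, rfl⟩
    have : ((i, j) ∈ arcs n A ∧ i ∈ B) := by
      rw [mem_arcs_block hB]
      refine ⟨hiT.1, hj.2, hiT.2, ?_⟩
      rintro k hk ⟨h1, h2⟩
      have h2' : k < j := h2
      have : k ≤ (B.filter (· < j)).max' hT := by
        refine Finset.le_max' _ k ?_
        simp only [mem_filter]
        exact ⟨hk, h2'⟩
      rw [← hi] at this
      omega
    exact ⟨this.1, this.2⟩
  · intro p _; rfl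

lemma sum_fst_block {B : Finset ℕ} (hB : B ∈ A.parts) (hne : B.Nonempty)
    {M : Type*} [AddCommMonoid M] (f : ℕ → M) :
    ∑ p ∈ (arcs n A).filter (fun p => p.1 ∈ B), f p.1
      = ∑ j ∈ B.erase (B.max' hne), f j := by
  refine Finset.sum_bij (fun p _ => p.1) ?_ ?_ ?_ ?_
  · intro p hp
    rw [mem_filter] at hp
    obtain ⟨h1, h2, hlt, hk⟩ := (mem_arcs_block hB p).1 ⟨hp.1, hp.2⟩
    show p.1 ∈ B.erase (B.max' hne)
    refine mem_erase.2 ⟨?_, h1⟩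
    intro h
    have := B.le_max' p.2 h2
    omega
  · intro p hp q hq hpq
    rw [mem_filter] at hp hq
    obtain ⟨hp1, hp2, hplt, hpk⟩ := (mem_arcs_block hB p).1 ⟨hp.1, hp.2⟩
    obtain ⟨hq1, hq2, hqlt, hqk⟩ := (mem_arcs_block hB q).1 ⟨hq.1, hq.2⟩
    have hpq : p.1 = q.1 := hpq
    have : p.2 = q.2 := by
      rcases lt_trichotomy p.2 q.2 with h | h | h
      · exact absurd ⟨by omega, h⟩ (hqk p.2 hp2)
      · exact h
      · exact absurd ⟨by omega, h⟩ (hpk q.2 hq2)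
    exact Prod.ext hpq this
  · intro j hj
    rw [mem_erase] at hj
    have hmax : j < B.max' hne := lt_of_le_of_ne (B.le_max' j hj.2) hj.1
    have hT : (B.filter (j < ·)).Nonempty :=
      ⟨B.max' hne, mem_filter.2 ⟨B.max'_mem hne, hmax⟩⟩
    set i := (B.filter (j < ·)).min' hT with hi
    have hiT := (B.filter (j < ·)).min'_mem hT
    rw [mem_filter] at hiT
    refine ⟨(j, i), mem_filter.2 ?_, rfl⟩
    have : ((j, i) ∈ arcs n A ∧ j ∈ B) := by
      rw [mem_arcs_block hB]
      refine ⟨hj.2, hiT.1, hiT.2, ?_⟩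
      rintro k hk ⟨h1, h2⟩
      have h1' : j < k := h1
      have : (B.filter (j < ·)).min' hT ≤ k := by
        refine Finset.min'_le _ k ?_
        simp only [mem_filter]
        exact ⟨hk, h1'⟩
      rw [← hi] at this
      omega
    exact ⟨this.1, this.2⟩
  · intro p _; rfl

end Aux

section Aux2
variable {n : ℕ} {A : Finpartition (Finset.Icc 1 n)}

lemma arcs_eq_biUnion :
    arcs n A = A.parts.biUnion (fun B => (arcs n A).filter (fun p => p.1 ∈ B)) := by
  ext p
  simp only [mem_biUnion, mem_filter]
  constructor
  · intro hp
    have hp' := hp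
    rw [arcs, mem_filter, mem_product] at hp'
    obtain ⟨B, hB, hpB⟩ := A.exists_mem hp'.1.1
    exact ⟨B, hB, hp, hpB⟩
  · rintro ⟨B, hB, hp, -⟩; exact hp

lemma parts_pairwiseDisjoint :
    (A.parts : Set (Finset ℕ)).PairwiseDisjoint
      (fun B => (arcs n A).filter (fun p : ℕ × ℕ => p.1 ∈ B)) := by
  intro B hB C hC hBC
  simp only [Function.onFun]
  rw [Finset.disjoint_left]
  intro p hp hq
  exact hBC (A.eq_of_mem_parts hB hC (mem_filter.1 hp).2 (mem_filter.1 hq).2)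

lemma sum_vertexDepth_eq_sum_arcs :
    ∑ v ∈ Finset.Icc 1 n, vertexDepth n A v
      = ∑ p ∈ arcs n A, (p.2 - p.1 - 1) := by
  have h1 : ∑ v ∈ Finset.Icc 1 n, vertexDepth n A v
      = ∑ p ∈ arcs n A, ((Finset.Icc 1 n).filter
          (fun v => p.1 < v ∧ v < p.2)).card := by
    simp only [vertexDepth, Finset.card_filter]
    rw [Finset.sum_comm]
  rw [h1]
  refine Finset.sum_congr rfl ?_
  intro p hp
  rw [arcs, mem_filter, mem_product] at hp
  obtain ⟨⟨hp1, hp2⟩, hlt, -⟩ := hp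
  rw [mem_Icc] at hp1 hp2
  have : (Finset.Icc 1 n).filter (fun v => p.1 < v ∧ v < p.2) = Finset.Ioo p.1 p.2 := by
    ext v
    simp only [mem_filter, mem_Icc, mem_Ioo]
    omega
  rw [this, Nat.card_Ioo]

lemma block_sum {B : Finset ℕ} (hB : B ∈ A.parts) (hne : B.Nonempty) :
    ∑ p ∈ (arcs n A).filter (fun p : ℕ × ℕ => p.1 ∈ B), ((p.2 : ℤ) - p.1 - 1)
      = (B.max' hne : ℤ) - B.min' hne + 1 - B.card := by
  have hsnd : ∑ p ∈ (arcs n A).filter (fun p : ℕ × ℕ => p.1 ∈ B), (p.2 : ℤ)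
      = (∑ j ∈ B, (j : ℤ)) - B.min' hne := by
    rw [sum_snd_block hB hne (fun j => (j : ℤ)),
      ← Finset.sum_erase_add B _ (B.min'_mem hne)]
    ring
  have hfst : ∑ p ∈ (arcs n A).filter (fun p : ℕ × ℕ => p.1 ∈ B), (p.1 : ℤ)
      = (∑ j ∈ B, (j : ℤ)) - B.max' hne := by
    rw [sum_fst_block hB hne (fun j => (j : ℤ)),
      ← Finset.sum_erase_add B _ (B.max'_mem hne)]
    ring
  have hcard : ∑ p ∈ (arcs n A).filter (fun p : ℕ × ℕ => p.1 ∈ B), (1 : ℤ)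
      = (B.card : ℤ) - 1 := by
    rw [sum_snd_block hB hne (fun _ => (1 : ℤ)), Finset.sum_const,
      Finset.card_erase_of_mem (B.min'_mem hne), nsmul_eq_mul, mul_one]
    have : 1 ≤ B.card := Finset.card_pos.2 hne
    omega
  calc ∑ p ∈ (arcs n A).filter (fun p : ℕ × ℕ => p.1 ∈ B), ((p.2 : ℤ) - p.1 - 1)
      = (∑ p ∈ (arcs n A).filter (fun p : ℕ × ℕ => p.1 ∈ B), (p.2 : ℤ))
        - (∑ p ∈ (arcs n A).filter (fun p : ℕ × ℕ => p.1 ∈ B), (p.1 : ℤ))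
        - (∑ p ∈ (arcs n A).filter (fun p : ℕ × ℕ => p.1 ∈ B), (1 : ℤ)) := by
        rw [← Finset.sum_sub_distrib, ← Finset.sum_sub_distrib]
    _ = (B.max' hne : ℤ) - B.min' hne + 1 - B.card := by
        rw [hsnd, hfst, hcard]; ring

end Aux2


/-- For `n ≥ 1` and a set partition `A` of `{1,…,n}`, the sum of the
depths of the vertices equals the dimension exponent of `A`:
`Σ_{v=1}^n depth(v) = Σ_{B block of A} (max B − min B + 1) − n`. -/
theorem sum_vertexDepth_eq_dimension_exponent (n : ℕ) (hn : 1 ≤ n)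
    (A : Finpartition (Finset.Icc 1 n)) :
    ∑ v ∈ Finset.Icc 1 n, vertexDepth n A v =
      (∑ B ∈ A.parts.attach,
        ((B : Finset ℕ).max' (A.nonempty_of_mem_parts B.2) -
          (B : Finset ℕ).min' (A.nonempty_of_mem_parts B.2) + 1)) - n := by
  have key : (∑ v ∈ Finset.Icc 1 n, vertexDepth n A v : ℤ) + n
      = ∑ B ∈ A.parts, ((if h : B.Nonempty then B.max' h - B.min' h + 1 else 0 : ℕ) : ℤ) := by
    have h1 : (∑ v ∈ Finset.Icc 1 n, vertexDepth n A v : ℤ)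
        = ∑ p ∈ arcs n A, ((p.2 : ℤ) - p.1 - 1) := by
      rw [← Nat.cast_sum, sum_vertexDepth_eq_sum_arcs, Nat.cast_sum]
      refine Finset.sum_congr rfl ?_
      intro p hp
      rw [arcs, mem_filter] at hp
      have hlt : p.1 < p.2 := hp.2.1
      omega
    rw [h1, arcs_eq_biUnion (A := A), Finset.sum_biUnion parts_pairwiseDisjoint]
    have h2 : ∀ B ∈ A.parts,
        ∑ p ∈ (arcs n A).filter (fun p : ℕ × ℕ => p.1 ∈ B), ((p.2 : ℤ) - p.1 - 1)
          = ((if h : B.Nonempty then B.max' h - B.min' h + 1 else 0 : ℕ) : ℤ) - B.card := by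
      intro B hB
      have hne : B.Nonempty := A.nonempty_of_mem_parts hB
      rw [block_sum hB hne, dif_pos hne]
      have hmm : B.min' hne ≤ B.max' hne := B.min'_le _ (B.max'_mem hne)
      push_cast [Nat.cast_sub hmm]
      ring
    rw [Finset.sum_congr rfl h2, Finset.sum_sub_distrib]
    have h3 : ∑ B ∈ A.parts, (B.card : ℤ) = n := by
      rw [← Nat.cast_sum]
      rw [A.sum_card_parts, Nat.card_Icc]
      simp
    rw [h3]
    ring
  have hattach : ∑ B ∈ A.parts.attach,
      ((B : Finset ℕ).max' (A.nonempty_of_mem_parts B.2) -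
        (B : Finset ℕ).min' (A.nonempty_of_mem_parts B.2) + 1)
      = ∑ B ∈ A.parts, (if h : B.Nonempty then B.max' h - B.min' h + 1 else 0) := by
    rw [← Finset.sum_attach A.parts (fun B => if h : B.Nonempty then B.max' h - B.min' h + 1 else 0)]
    refine Finset.sum_congr rfl ?_
    intro B _
    rw [dif_pos (A.nonempty_of_mem_parts B.2)]
  rw [hattach]
  have key' : (∑ v ∈ Finset.Icc 1 n, vertexDepth n A v) + n
      = ∑ B ∈ A.parts, (if h : B.Nonempty then B.max' h - B.min' h + 1 else 0) := by
    exact_mod_cast key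
  omega
end
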